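/- For any allocation z of m objects among n agents, there exists a fractionally Pareto-optimal allocation z* such that (a) u_i(z*_i) ≥ u_i(z_i) for every agent i, (b) the undirected bipartite consumption graph of z* (edge between agent i and object o iff z*_{i,o} > 0) is acyclic, and (c) z* has at most n−1 sharings. -/

import Mathlib

set_option synthInstance.maxHeartbeats 1000000
set_option maxHeartbeats 1000000


open Finset

/-- An allocation: nonnegative matrix with column sums 1. -/
def IsAllocation {n m : ℕ} (z : Fin n → Fin m → ℝ) : Prop :=
  (∀ i o, 0 ≤ z i o) ∧ ∀ o, ∑ i, z i o = 1

/-- Additive utility of agent `i` at allocation `z`. -/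
def utility {n m : ℕ} (v z : Fin n → Fin m → ℝ) (i : Fin n) : ℝ :=
  ∑ o, v i o * z i o

/-- Fractional Pareto optimality: no feasible allocation weakly improves everyone
and strictly improves someone. -/
def IsFPO {n m : ℕ} (v z : Fin n → Fin m → ℝ) : Prop :=
  ¬ ∃ y, IsAllocation y ∧ (∀ i, utility v z i ≤ utility v y i) ∧
    ∃ i, utility v z i < utility v y i

/-- Number of sharings of allocation `z`. -/
noncomputable def sharings {n m : ℕ} (z : Fin n → Fin m → ℝ) : ℕ :=
  ∑ o : Fin m, ((Finset.univ.filter (fun i : Fin n => 0 < z i o)).card - 1)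

/-- The undirected bipartite consumption graph of an allocation. -/
def consGraph {n m : ℕ} (z : Fin n → Fin m → ℝ) : SimpleGraph (Fin n ⊕ Fin m) where
  Adj x y :=
    (∃ i o, x = Sum.inl i ∧ y = Sum.inr o ∧ 0 < z i o) ∨
    (∃ i o, x = Sum.inr o ∧ y = Sum.inl i ∧ 0 < z i o)
  symm := by
    constructor
    rintro x y (⟨i, o, rfl, rfl, h⟩ | ⟨i, o, rfl, rfl, h⟩)
    · exact Or.inr ⟨i, o, rfl, rfl, h⟩
    · exact Or.inl ⟨i, o, rfl, rfl, h⟩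
  loopless := by
    constructor
    rintro x (⟨i, o, rfl, h, -⟩ | ⟨i, o, rfl, h, -⟩) <;> simp at h


section LinAlg
variable {ι : Type*} [DecidableEq ι]
def suppSub (s : Finset ι) : Submodule ℝ (ι → ℝ) where
  carrier := {g | ∀ p ∉ s, g p = 0}
  add_mem' := by intro a b ha hb p hp; simp [ha p hp, hb p hp]
  zero_mem' := by intro p hp; rfl
  smul_mem' := by intro c a ha p hp; simp [ha p hp]
noncomputable def suppEquiv (s : Finset ι) : suppSub s ≃ₗ[ℝ] (↥s → ℝ) where
  toFun g := fun p => g.val p.val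
  map_add' := by intros; rfl
  map_smul' := by intros; rfl
  invFun f := ⟨fun p => if h : p ∈ s then f ⟨p, h⟩ else 0, by intro p hp; simp [hp]⟩
  left_inv := by
    rintro ⟨g, hg⟩; apply Subtype.ext; funext p
    by_cases h : p ∈ s
    · simp [h]
    · simp [h, hg p h]
  right_inv := by intro f; funext p; simp
lemma finrank_suppSub (s : Finset ι) :
    Module.finrank ℝ (suppSub s) = s.card := by
  rw [(suppEquiv s).finrank_eq, Module.finrank_fintype_fun_eq_card, Fintype.card_coe]
end LinAlg


section Maps
variable {n m : ℕ} (v : Fin n → Fin m → ℝ)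
def colMap : (Fin n × Fin m → ℝ) →ₗ[ℝ] (Fin m → ℝ) where
  toFun g := fun o => ∑ i, g (i, o)
  map_add' := by intros; funext o; simp [Finset.sum_add_distrib]
  map_smul' := by intros; funext o; simp [Finset.mul_sum]
def utMap : (Fin n × Fin m → ℝ) →ₗ[ℝ] (Fin n → ℝ) where
  toFun g := fun i => ∑ o, v i o * g (i, o)
  map_add' := by intros; funext i; simp [Finset.sum_add_distrib, mul_add]
  map_smul' := by intros; funext i; simp [Finset.mul_sum]; ring_nf; simp [mul_assoc, mul_comm]
lemma card_le_of (E : Finset (Fin n × Fin m)) :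
    E.card ≤ (E.image Prod.snd).card +
      Module.finrank ℝ (LinearMap.ker ((colMap (n := n) (m := m)).domRestrict (suppSub E))) := by
  have h1 : Module.finrank ℝ (suppSub E) = E.card := finrank_suppSub E
  have h2 := LinearMap.finrank_range_add_finrank_ker ((colMap (n := n) (m := m)).domRestrict (suppSub E))
  have h3 : LinearMap.range ((colMap (n := n) (m := m)).domRestrict (suppSub E))
      ≤ suppSub (E.image Prod.snd) := by
    rintro x ⟨g, rfl⟩
    intro o ho
    have : ∀ i, g.val (i, o) = 0 := by
      intro i; apply g.2; intro hmem
      exact ho (Finset.mem_image.2 ⟨(i, o), hmem, rfl⟩)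
    simp [colMap, LinearMap.domRestrict, this]
  have h4 : Module.finrank ℝ (LinearMap.range ((colMap (n := n) (m := m)).domRestrict (suppSub E)))
      ≤ (E.image Prod.snd).card := by
    calc Module.finrank ℝ (LinearMap.range _) ≤ Module.finrank ℝ (suppSub (E.image Prod.snd)) :=
          Submodule.finrank_mono h3
      _ = _ := finrank_suppSub _
  omega
end Maps

section Core
variable {n m : ℕ} (v : Fin n → Fin m → ℝ)




def PropP (y : Fin n → Fin m → ℝ) : Prop :=
  ∀ d : Fin n → Fin m → ℝ, (∀ i o, d i o ≠ 0 → 0 < y i o) →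
    (∀ o, ∑ i, d i o = 0) → (∀ i, ∑ o, v i o * d i o = 0) → d = 0

def PropQ (y : Fin n → Fin m → ℝ) : Prop :=
  ∀ d : Fin n → Fin m → ℝ, (∀ i o, d i o ≠ 0 → 0 < y i o) →
    (∀ o, ∑ i, d i o = 0) → (∀ i, 0 ≤ ∑ o, v i o * d i o) →
    (∃ i, 0 < ∑ o, v i o * d i o) → False

/-- Generic injectivity: an element of the kernel with zero utility vector is zero. -/
lemma ker_util_eq_zero {y : Fin n → Fin m → ℝ} (hP : PropP v y)
    {E : Finset (Fin n × Fin m)} (hE : ∀ q ∈ E, 0 < y q.1 q.2)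
    (g : ↥(LinearMap.ker ((colMap (n := n) (m := m)).domRestrict (suppSub E))))
    (hu : utMap v g.val.val = 0) : g = 0 := by
  have hcol : ∀ o, ∑ i, g.val.val (i, o) = 0 := by
    intro o
    have := g.2
    rw [LinearMap.mem_ker] at this
    exact congrFun this o
  have hd := hP (fun i o => g.val.val (i, o))
    (fun i o hne => by
      by_contra hpos
      exact hne (g.val.2 (i, o) (fun hmem => hpos (hE _ hmem))))
    hcol
    (fun i => congrFun hu i)
  apply Subtype.ext; apply Subtype.ext; funext q
  have := congrFun (congrFun hd q.1) q.2
  simpa using this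

lemma sharings_le {y : Fin n → Fin m → ℝ} (hy : IsAllocation y) (hn : 0 < n)
    (hP : PropP v y) (hQ : PropQ v y) : sharings y ≤ n - 1 := by
  classical
  set E : Finset (Fin n × Fin m) := univ.filter (fun q => 0 < y q.1 q.2) with hE
  have hEy : ∀ q ∈ E, 0 < y q.1 q.2 := by intro q hq; exact (mem_filter.1 hq).2
  set Kc := LinearMap.ker ((colMap (n := n) (m := m)).domRestrict (suppSub E)) with hKc
  set w : ↥Kc →ₗ[ℝ] (Fin n → ℝ) :=
    (utMap v) ∘ₗ (suppSub E).subtype ∘ₗ Kc.subtype with hw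
  have hwval : ∀ g : ↥Kc, w g = utMap v g.val.val := fun g => rfl
  -- injectivity
  have winj : Function.Injective w := by
    intro a b hab
    have h0 : w (a - b) = 0 := by
      have hms := LinearMap.map_sub w a b
      rw [hms, hab, sub_self]
    have h1 := ker_util_eq_zero v hP hEy (a - b) (by rw [← hwval]; exact h0)
    exact sub_eq_zero.1 h1
  -- range not top
  have hrange : LinearMap.range w ≠ ⊤ := by
    intro htop
    obtain ⟨g, hg⟩ := LinearMap.range_eq_top.1 htop (fun _ => 1)
    have hcol : ∀ o, ∑ i, g.val.val (i, o) = 0 := by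
      intro o
      have := g.2
      rw [LinearMap.mem_ker] at this
      exact congrFun this o
    refine hQ (fun i o => g.val.val (i, o))
      (fun i o hne => by
        by_contra hpos
        exact hne (g.val.2 (i, o) (fun hmem => hpos (hEy _ hmem))))
      hcol
      (fun i => ?_) ⟨⟨0, hn⟩, ?_⟩
    · have : ∑ o, v i o * g.val.val (i, o) = 1 := congrFun hg i
      rw [this]; norm_num
    · have : ∑ o, v (⟨0, hn⟩ : Fin n) o * g.val.val ((⟨0, hn⟩ : Fin n), o) = 1 :=
        congrFun hg ⟨0, hn⟩
      rw [this]; norm_num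
  -- dimension chain
  have hfr : Module.finrank ℝ Kc = Module.finrank ℝ (LinearMap.range w) :=
    (LinearMap.finrank_range_of_inj winj).symm
  have hlt : Module.finrank ℝ (LinearMap.range w) < n := by
    have := Submodule.finrank_lt (K := ℝ) (V := Fin n → ℝ) hrange
    simpa [Module.finrank_fintype_fun_eq_card] using this
  have hdim := card_le_of (n := n) (m := m) E
  have himle : (E.image Prod.snd).card ≤ m := by
    simpa using Finset.card_le_univ (E.image Prod.snd)
  have hcardE : E.card ≤ m + (n - 1) := by
    rw [hfr] at hdim; omega
  -- card E = ∑ fibers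
  have hfib : E.card = ∑ o : Fin m, (univ.filter (fun i : Fin n => 0 < y i o)).card := by
    rw [Finset.card_eq_sum_card_fiberwise (f := Prod.snd) (t := univ) (fun q _ => mem_univ _)]
    refine Finset.sum_congr rfl (fun o _ => ?_)
    have heq : filter (fun q => Prod.snd q = o) E
        = (univ.filter fun i : Fin n => 0 < y i o).image (fun i => (i, o)) := by
      ext q
      simp only [hE, mem_filter, mem_univ, true_and, mem_image, filter_filter]
      constructor
      · rintro ⟨h1, h2⟩
        exact ⟨q.1, by rw [← h2]; exact h1, by rw [← h2]⟩
      · rintro ⟨i, hi, rfl⟩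
        exact ⟨hi, rfl⟩
    rw [heq, Finset.card_image_of_injective _ (fun a b hab => (Prod.ext_iff.1 hab).1)]
  -- each column has a positive entry
  have hpos : ∀ o : Fin m, 1 ≤ (univ.filter (fun i : Fin n => 0 < y i o)).card := by
    intro o
    rw [Nat.one_le_iff_ne_zero, ← Nat.pos_iff_ne_zero, Finset.card_pos]
    by_contra hempty
    rw [Finset.not_nonempty_iff_eq_empty, Finset.filter_eq_empty_iff] at hempty
    have hz0 : ∀ i : Fin n, y i o = 0 := fun i =>
      le_antisymm (not_lt.1 (hempty (mem_univ i))) (hy.1 i o)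
    have h2 := hy.2 o
    rw [Finset.sum_congr rfl (fun i _ => hz0 i)] at h2
    simp at h2
  have hsum : sharings y + m = E.card := by
    rw [hfib, sharings]
    have h5 : ∑ o : Fin m, (univ.filter (fun i : Fin n => 0 < y i o)).card
        = ∑ o : Fin m, (((univ.filter (fun i : Fin n => 0 < y i o)).card - 1) + 1) :=
      Finset.sum_congr rfl (fun o _ => (Nat.sub_add_cancel (hpos o)).symm)
    rw [h5, Finset.sum_add_distrib]
    simp
  omega


lemma end_mem_support_tail {V : Type*} {G : SimpleGraph V} {a : V} (p : G.Walk a a)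
    (hne : p ≠ SimpleGraph.Walk.nil) : a ∈ p.support.tail := by
  cases p with
  | nil => exact absurd rfl hne
  | cons h q => simpa using q.end_mem_support

lemma acyclic_of {y : Fin n → Fin m → ℝ} (hP : PropP v y) (hQ : PropQ v y) :
    (consGraph y).IsAcyclic := by
  classical
  intro a p hp
  set E : Finset (Fin n × Fin m) :=
    univ.filter (fun q => s(Sum.inl q.1, Sum.inr q.2) ∈ p.edges) with hE
  have hEy : ∀ q ∈ E, 0 < y q.1 q.2 := by
    intro q hq
    have hadj : (consGraph y).Adj (Sum.inl q.1) (Sum.inr q.2) :=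
      p.edges_subset_edgeSet (mem_filter.1 hq).2
    rcases hadj with ⟨i, o, h1, h2, h3⟩ | ⟨i, o, h1, h2, h3⟩
    · rw [Sum.inl.injEq] at h1
      rw [Sum.inr.injEq] at h2
      rw [h1, h2]; exact h3
    · exact absurd h1 (by simp)
  -- card E = p.length
  have hlenE : E.card = p.length := by
    have h1 : p.edges.toFinset.card = p.length := by
      rw [List.toFinset_card_of_nodup hp.edges_nodup, p.length_edges]
    rw [← h1]
    apply Finset.card_bij (fun q _ => s(Sum.inl q.1, Sum.inr q.2))
    · intro q hq
      exact List.mem_toFinset.2 (mem_filter.1 hq).2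
    · intro q hq r hr hqr
      simp only [Sym2.eq_iff] at hqr
      rcases hqr with ⟨ha, hb⟩ | ⟨ha, hb⟩
      · rw [Sum.inl.injEq] at ha
        rw [Sum.inr.injEq] at hb
        exact Prod.ext ha hb
      · exact absurd ha (by simp)
    · intro e he
      have hadj := p.edges_subset_edgeSet (List.mem_toFinset.1 he)
      induction e using Sym2.ind with
      | _ x z =>
        rcases hadj with ⟨i, o, h1, h2, h3⟩ | ⟨i, o, h1, h2, h3⟩
        · have h1' : x = Sum.inl i := h1
          have h2' : z = Sum.inr o := h2
          subst h1'; subst h2'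
          refine ⟨(i, o), ?_, rfl⟩
          rw [hE, mem_filter]
          exact ⟨mem_univ _, List.mem_toFinset.1 he⟩
        · have h1' : x = Sum.inr o := h1
          have h2' : z = Sum.inl i := h2
          subst h1'; subst h2'
          refine ⟨(i, o), ?_, Sym2.eq_swap⟩
          rw [hE, mem_filter]
          refine ⟨mem_univ _, ?_⟩
          rw [show s(Sum.inl i, Sum.inr o) = s(Sum.inr o, Sum.inl i) from Sym2.eq_swap]
          exact List.mem_toFinset.1 he
  set Ac : Finset (Fin n) := E.image Prod.fst with hAc
  set Oc : Finset (Fin m) := E.image Prod.snd with hOc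
  -- every support vertex is in the tail
  have htail : ∀ x ∈ p.support, x ∈ p.support.tail := by
    have hmema : a ∈ p.support.tail := end_mem_support_tail p hp.ne_nil
    intro x hx
    rw [p.support_eq_cons] at hx
    rcases List.mem_cons.1 hx with rfl | hx
    · exact hmema
    · exact hx
  have hAO : Ac.card + Oc.card ≤ p.length := by
    have hsub : (Ac.image Sum.inl ∪ Oc.image Sum.inr : Finset (Fin n ⊕ Fin m))
        ⊆ p.support.tail.toFinset := by
      intro x hx
      rw [List.mem_toFinset]
      rcases Finset.mem_union.1 hx with hx | hx
      · obtain ⟨i, hi, rfl⟩ := Finset.mem_image.1 hx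
        obtain ⟨q, hq, rfl⟩ := Finset.mem_image.1 hi
        exact htail _ (p.fst_mem_support_of_mem_edges (mem_filter.1 hq).2)
      · obtain ⟨o, ho, rfl⟩ := Finset.mem_image.1 hx
        obtain ⟨q, hq, rfl⟩ := Finset.mem_image.1 ho
        exact htail _ (p.snd_mem_support_of_mem_edges (mem_filter.1 hq).2)
    have hdisj : Disjoint (Ac.image Sum.inl) (Oc.image Sum.inr : Finset (Fin n ⊕ Fin m)) := by
      rw [Finset.disjoint_left]
      rintro x hx hy
      obtain ⟨i, _, rfl⟩ := Finset.mem_image.1 hx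
      obtain ⟨o, _, h⟩ := Finset.mem_image.1 hy
      exact absurd h (by simp)
    have hcard := Finset.card_le_card hsub
    rw [Finset.card_union_of_disjoint hdisj,
      Finset.card_image_of_injective _ Sum.inl_injective,
      Finset.card_image_of_injective _ Sum.inr_injective] at hcard
    calc Ac.card + Oc.card ≤ p.support.tail.toFinset.card := hcard
      _ ≤ p.support.tail.length := List.toFinset_card_le _
      _ = p.length := by rw [List.length_tail, SimpleGraph.Walk.length_support]; omega
  set Kc := LinearMap.ker ((colMap (n := n) (m := m)).domRestrict (suppSub E)) with hKc
  set w : ↥Kc →ₗ[ℝ] (Fin n → ℝ) :=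
    (utMap v) ∘ₗ (suppSub E).subtype ∘ₗ Kc.subtype with hw
  set wA : ↥Kc →ₗ[ℝ] (↥Ac → ℝ) :=
    (LinearMap.funLeft ℝ ℝ (Subtype.val : ↥Ac → Fin n)) ∘ₗ w with hwA
  have hrow : ∀ (g : ↥Kc) (i : Fin n), i ∉ Ac → w g i = 0 := by
    intro g i hi
    have hzero : ∀ o : Fin m, g.val.val (i, o) = 0 := by
      intro o
      apply g.val.2
      intro hmem
      exact hi (Finset.mem_image.2 ⟨(i, o), hmem, rfl⟩)
    show ∑ o, v i o * g.val.val (i, o) = 0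
    simp [hzero]
  have hwAinj : Function.Injective wA := by
    intro g1 g2 hab
    have h0 : wA (g1 - g2) = 0 := by
      have hms := LinearMap.map_sub wA g1 g2
      rw [hms, hab, sub_self]
    have hu : w (g1 - g2) = 0 := by
      funext i
      by_cases hi : i ∈ Ac
      · exact congrFun h0 ⟨i, hi⟩
      · exact hrow _ i hi
    have h1 := ker_util_eq_zero v hP hEy (g1 - g2) hu
    exact sub_eq_zero.1 h1
  have hfrle : Module.finrank ℝ Kc ≤ Ac.card := by
    calc Module.finrank ℝ Kc = Module.finrank ℝ (LinearMap.range wA) :=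
          (LinearMap.finrank_range_of_inj hwAinj).symm
      _ ≤ Module.finrank ℝ (↥Ac → ℝ) := Submodule.finrank_le _
      _ = Ac.card := by rw [Module.finrank_fintype_fun_eq_card, Fintype.card_coe]
  have hdim := card_le_of (n := n) (m := m) E
  have hfreq : Module.finrank ℝ Kc = Ac.card := by
    rw [hlenE, ← hOc, ← hKc] at hdim
    omega
  have hcod : Module.finrank ℝ Kc = Module.finrank ℝ (↥Ac → ℝ) := by
    rw [hfreq, Module.finrank_fintype_fun_eq_card, Fintype.card_coe]
  have hsurj : Function.Surjective wA :=
    (LinearMap.injective_iff_surjective_of_finrank_eq_finrank (V := ↥Kc) (V₂ := ↥Ac → ℝ) hcod (f := wA)).1 hwAinj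
  obtain ⟨g, hg⟩ := hsurj (fun _ => 1)
  have hcol : ∀ o, ∑ i, g.val.val (i, o) = 0 := by
    intro o
    have h := g.2
    rw [LinearMap.mem_ker] at h
    exact congrFun h o
  have hval : ∀ i (hi : i ∈ Ac), ∑ o, v i o * g.val.val (i, o) = 1 := by
    intro i hi
    exact congrFun hg ⟨i, hi⟩
  have hAcne : Ac.Nonempty := by
    have : E.Nonempty := by
      rw [← Finset.card_pos, hlenE]
      have := hp.three_le_length
      omega
    obtain ⟨q, hq⟩ := this
    exact ⟨q.1, Finset.mem_image.2 ⟨q, hq, rfl⟩⟩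
  obtain ⟨i0, hi0⟩ := hAcne
  refine hQ (fun i o => g.val.val (i, o))
    (fun i o hne => by
      by_contra hpos
      exact hne (g.val.2 (i, o) (fun hmem => hpos (hEy _ hmem))))
    hcol (fun i => ?_) ⟨i0, ?_⟩
  · by_cases hi : i ∈ Ac
    · rw [hval i hi]; norm_num
    · have := hrow g i hi
      rw [show (∑ o, v i o * g.val.val (i, o)) = w g i from rfl, this]
  · rw [hval i0 hi0]; norm_num

lemma utility_add (y d : Fin n → Fin m → ℝ) (ε : ℝ) (i : Fin n) :
    utility v (fun i o => y i o + ε * d i o) i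
      = utility v y i + ε * ∑ o, v i o * d i o := by
  unfold utility
  rw [Finset.mul_sum, ← Finset.sum_add_distrib]
  exact Finset.sum_congr rfl fun o _ => by ring

lemma exists_alloc_pert {y d : Fin n → Fin m → ℝ} (hy : IsAllocation y)
    (hsupp : ∀ i o, d i o ≠ 0 → 0 < y i o) (hcol : ∀ o, ∑ i, d i o = 0) :
    ∃ ε : ℝ, 0 < ε ∧ IsAllocation (fun i o => y i o + ε * d i o) := by
  classical
  set T : Finset (Fin n × Fin m) := univ.filter fun q => d q.1 q.2 ≠ 0 with hT
  by_cases hTne : T.Nonempty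
  · set R := T.image fun q => y q.1 q.2 / |d q.1 q.2| with hR
    set ε := R.min' (hTne.image _) with hε
    have hεmem := Finset.min'_mem R (hTne.image _)
    obtain ⟨q0, hq0T, hq0⟩ := Finset.mem_image.1 hεmem
    have hq0d : d q0.1 q0.2 ≠ 0 := (mem_filter.1 hq0T).2
    have hεpos : 0 < ε := by
      rw [hε, ← hq0]
      exact div_pos (hsupp _ _ hq0d) (abs_pos.2 hq0d)
    refine ⟨ε, hεpos, ⟨fun i o => ?_, fun o => ?_⟩⟩
    · show 0 ≤ y i o + ε * d i o
      by_cases hd : d i o = 0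
      · simp only [hd, mul_zero, add_zero]
        exact hy.1 i o
      · have hmem : y i o / |d i o| ∈ R :=
          Finset.mem_image.2 ⟨(i, o), mem_filter.2 ⟨mem_univ _, hd⟩, rfl⟩
        have hle : ε ≤ y i o / |d i o| := Finset.min'_le R _ hmem
        have habs : 0 < |d i o| := abs_pos.2 hd
        have h1 : ε * |d i o| ≤ y i o := (le_div_iff₀ habs).1 hle
        have h2 : -|d i o| ≤ d i o := neg_abs_le _
        nlinarith [mul_le_mul_of_nonneg_left h2 hεpos.le]
    · show ∑ i, (y i o + ε * d i o) = 1
      rw [Finset.sum_add_distrib, hy.2 o, ← Finset.mul_sum, hcol o]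
      ring
  · have hd0 : ∀ i o, d i o = 0 := by
      intro i o
      by_contra h
      exact hTne ⟨(i, o), mem_filter.2 ⟨mem_univ _, h⟩⟩
    refine ⟨1, one_pos, ?_⟩
    have : (fun i o => y i o + 1 * d i o) = y := by
      funext i o; simp [hd0 i o]
    rw [this]
    exact hy

lemma exists_min_max (z : Fin n → Fin m → ℝ) (hz : IsAllocation z) :
    ∃ y, IsAllocation y ∧ (∀ i, utility v z i ≤ utility v y i) ∧ IsFPO v y ∧
      PropP v y ∧ PropQ v y := by
  classical
  set K : Set (Fin n → Fin m → ℝ) :=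
    {y | IsAllocation y ∧ ∀ i, utility v z i ≤ utility v y i} with hK
  have hKz : z ∈ K := ⟨hz, fun i => le_refl _⟩
  have hu : ∀ i : Fin n, Continuous fun y : Fin n → Fin m → ℝ => utility v y i := by
    intro i
    unfold utility
    exact continuous_finset_sum _ fun o _ =>
      continuous_const.mul ((continuous_apply o).comp (continuous_apply i))
  have hbox : IsCompact (Set.univ.pi fun _ : Fin n => Set.univ.pi fun _ : Fin m => Set.Icc (0:ℝ) 1) :=
    isCompact_univ_pi fun _ => isCompact_univ_pi fun _ => isCompact_Icc
  have hsub : K ⊆ Set.univ.pi fun _ : Fin n => Set.univ.pi fun _ : Fin m => Set.Icc (0:ℝ) 1 := by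
    intro y hy
    intro i _
    intro o _
    refine ⟨hy.1.1 i o, ?_⟩
    have h1 : y i o ≤ ∑ i', y i' o :=
      Finset.single_le_sum (f := fun i' => y i' o) (fun i' _ => hy.1.1 i' o) (mem_univ i)
    rw [hy.1.2 o] at h1
    exact h1
  have hcl : IsClosed K := by
    have hrw : K = (⋂ i, ⋂ o, {y : Fin n → Fin m → ℝ | 0 ≤ y i o}) ∩
        ((⋂ o, {y : Fin n → Fin m → ℝ | ∑ i, y i o = 1}) ∩
         (⋂ i, {y : Fin n → Fin m → ℝ | utility v z i ≤ utility v y i})) := by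
      ext y
      simp only [hK, Set.mem_setOf_eq, Set.mem_inter_iff, Set.mem_iInter, IsAllocation]
      tauto
    rw [hrw]
    refine IsClosed.inter (isClosed_iInter fun i => isClosed_iInter fun o => ?_)
      (IsClosed.inter (isClosed_iInter fun o => ?_) (isClosed_iInter fun i => ?_))
    · exact isClosed_le continuous_const ((continuous_apply o).comp (continuous_apply i))
    · exact isClosed_eq (continuous_finset_sum _ fun i _ =>
        ((continuous_apply o).comp (continuous_apply i))) continuous_const
    · exact isClosed_le continuous_const (hu i)
  have hKcomp : IsCompact K := hbox.of_isClosed_subset hcl hsub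
  set W : (Fin n → Fin m → ℝ) → ℝ := fun x => ∑ i, utility v x i with hW
  have hWcont : Continuous W := continuous_finset_sum _ fun i _ => hu i
  obtain ⟨y0, hy0K, hy0max⟩ := hKcomp.exists_isMaxOn ⟨z, hKz⟩ hWcont.continuousOn
  set cs : Set ℕ := {c | ∃ x, (x ∈ K ∧ ∀ x' ∈ K, W x' ≤ W x) ∧
    (univ.filter fun q : Fin n × Fin m => 0 < x q.1 q.2).card = c} with hcsdef
  have hcs : cs.Nonempty := ⟨_, y0, ⟨hy0K, fun x hx => hy0max hx⟩, rfl⟩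
  obtain ⟨y, ⟨hyK, hymax⟩, hycard⟩ := Nat.sInf_mem hcs
  have hyalloc : IsAllocation y := hyK.1
  have hydom : ∀ i, utility v z i ≤ utility v y i := hyK.2
  have hfpo : IsFPO v y := by
    rintro ⟨x, hxalloc, hxge, i1, hi1⟩
    have hxK : x ∈ K := ⟨hxalloc, fun i => le_trans (hydom i) (hxge i)⟩
    have h1 : W x ≤ W y := hymax x hxK
    have h2 : W y < W x := Finset.sum_lt_sum (fun i _ => hxge i) ⟨i1, mem_univ _, hi1⟩
    linarith
  have hQ : PropQ v y := by
    intro d hsupp hcol hge hex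
    obtain ⟨i1, hi1⟩ := hex
    obtain ⟨ε, hεpos, halloc⟩ := exists_alloc_pert hyalloc hsupp hcol
    set x := fun i o => y i o + ε * d i o with hx
    have hxut : ∀ i, utility v x i = utility v y i + ε * ∑ o, v i o * d i o :=
      fun i => utility_add v y d ε i
    have hxK : x ∈ K := by
      refine ⟨halloc, fun i => ?_⟩
      rw [hxut i]
      have h1 := hge i
      have h2 := hydom i
      nlinarith
    have hΔpos : 0 < ∑ i, ∑ o, v i o * d i o :=
      Finset.sum_pos' (fun i _ => hge i) ⟨i1, mem_univ _, hi1⟩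
    have hlt : W y < W x := by
      have hWx : W x = W y + ε * ∑ i, ∑ o, v i o * d i o := by
        rw [hW]
        simp only [hxut]
        rw [Finset.sum_add_distrib, ← Finset.mul_sum]
      rw [hWx]
      nlinarith
    exact absurd (hymax x hxK) (not_le.2 hlt)
  have hP : PropP v y := by
    intro d hsupp hcol hut
    by_contra hd0
    have hneg : ∃ q : Fin n × Fin m, d q.1 q.2 < 0 := by
      have hex : ∃ q : Fin n × Fin m, d q.1 q.2 ≠ 0 := by
        by_contra h
        push_neg at h
        exact hd0 (funext fun i => funext fun o => h (i, o))
      obtain ⟨q, hq⟩ := hex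
      rcases lt_or_gt_of_ne hq with h | h
      · exact ⟨q, h⟩
      · by_contra hall
        push_neg at hall
        have hposum : 0 < ∑ i, d i q.2 :=
          Finset.sum_pos' (fun i _ => hall (i, q.2)) ⟨q.1, mem_univ _, h⟩
        have := hcol q.2
        linarith
    obtain ⟨q1, hq1⟩ := hneg
    set T : Finset (Fin n × Fin m) := univ.filter fun q => d q.1 q.2 < 0 with hT
    have hTne : T.Nonempty := ⟨q1, mem_filter.2 ⟨mem_univ _, hq1⟩⟩
    set R := T.image fun q => y q.1 q.2 / (-(d q.1 q.2)) with hR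
    set ε := R.min' (hTne.image _) with hε
    have hεmem := Finset.min'_mem R (hTne.image _)
    obtain ⟨q0, hq0T, hq0⟩ := Finset.mem_image.1 hεmem
    have hq0neg : d q0.1 q0.2 < 0 := (mem_filter.1 hq0T).2
    have hy0pos : 0 < y q0.1 q0.2 := hsupp _ _ (ne_of_lt hq0neg)
    have hεpos : 0 < ε := by
      rw [hε, ← hq0]
      exact div_pos hy0pos (by linarith)
    set x := fun i o => y i o + ε * d i o with hx
    have hxnn : ∀ i o, 0 ≤ x i o := by
      intro i o
      by_cases hd : d i o < 0
      · have hmem : y i o / (-(d i o)) ∈ R :=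
          Finset.mem_image.2 ⟨(i, o), mem_filter.2 ⟨mem_univ _, hd⟩, rfl⟩
        have hle : ε ≤ y i o / (-(d i o)) := Finset.min'_le R _ hmem
        have hdpos : 0 < -(d i o) := by linarith
        have h1 : ε * -(d i o) ≤ y i o := (le_div_iff₀ hdpos).1 hle
        simp only [hx]
        nlinarith
      · push_neg at hd
        have h1 : 0 ≤ ε * d i o := mul_nonneg hεpos.le hd
        have h2 := hyalloc.1 i o
        simp only [hx]
        linarith
    have hxalloc : IsAllocation x := by
      refine ⟨hxnn, fun o => ?_⟩
      simp only [hx]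
      rw [Finset.sum_add_distrib, hyalloc.2 o, ← Finset.mul_sum, hcol o]
      ring
    have hxut : ∀ i, utility v x i = utility v y i := by
      intro i
      rw [hx, utility_add, hut i]
      ring
    have hxK : x ∈ K := ⟨hxalloc, fun i => by rw [hxut i]; exact hydom i⟩
    have hxmax : ∀ x' ∈ K, W x' ≤ W x := by
      intro x' hx'
      have hWeq : W x = W y := Finset.sum_congr rfl fun i _ => hxut i
      rw [hWeq]
      exact hymax x' hx'
    have hsubset : (univ.filter fun q : Fin n × Fin m => 0 < x q.1 q.2)
        ⊂ (univ.filter fun q : Fin n × Fin m => 0 < y q.1 q.2) := by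
      refine Finset.ssubset_iff_of_subset ?_ |>.2 ?_
      · intro q hq
        rw [mem_filter] at hq ⊢
        refine ⟨mem_univ _, ?_⟩
        by_contra hyq
        push_neg at hyq
        have hyq0 : y q.1 q.2 = 0 := le_antisymm hyq (hyalloc.1 q.1 q.2)
        have hdq0 : d q.1 q.2 = 0 := by
          by_contra hne
          exact absurd (hsupp _ _ hne) (by rw [hyq0]; exact lt_irrefl 0)
        have : x q.1 q.2 = 0 := by simp [hx, hyq0, hdq0]
        rw [this] at hq
        exact lt_irrefl 0 hq.2
      · refine ⟨q0, mem_filter.2 ⟨mem_univ _, hy0pos⟩, ?_⟩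
        rw [mem_filter]
        push_neg
        intro _
        have hεd : ε * d q0.1 q0.2 = -(y q0.1 q0.2) := by
          rw [hε, ← hq0]
          field_simp
          rw [div_self (ne_of_lt hq0neg)]
        have : x q0.1 q0.2 = 0 := by
          simp only [hx]
          rw [hεd]
          ring
        rw [this]
    have hcardlt := Finset.card_lt_card hsubset
    have hle2 : sInf cs ≤ (univ.filter fun q : Fin n × Fin m => 0 < x q.1 q.2).card :=
      Nat.sInf_le ⟨x, ⟨hxK, hxmax⟩, rfl⟩
    omega
  exact ⟨y, hyalloc, hydom, hfpo, hP, hQ⟩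

end Core

/-- Every allocation is weakly dominated by an fPO allocation whose consumption graph
is acyclic and which has at most n-1 sharings. -/
theorem stmt5 {n m : ℕ} (v z : Fin n → Fin m → ℝ) (hz : IsAllocation z) :
    ∃ zs : Fin n → Fin m → ℝ, IsAllocation zs ∧ IsFPO v zs ∧
      (∀ i, utility v z i ≤ utility v zs i) ∧
      (consGraph zs).IsAcyclic ∧
      sharings zs ≤ n - 1 := by
  classical
  rcases Nat.eq_zero_or_pos n with hn | hn
  · subst hn
    refine ⟨z, hz, ?_, fun i => le_refl _, ?_, ?_⟩
    · rintro ⟨y, -, -, i, -⟩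
      exact i.elim0
    · intro a p hp
      cases p with
      | nil => exact hp.ne_nil rfl
      | cons h q =>
        rcases h with ⟨i, o, h1, h2, h3⟩ | ⟨i, o, h1, h2, h3⟩ <;> exact i.elim0
    · simp [sharings]
  · obtain ⟨y, hyalloc, hydom, hfpo, hP, hQ⟩ := exists_min_max v z hz
    exact ⟨y, hyalloc, hfpo, hydom, acyclic_of v hP hQ, sharings_le v hyalloc hn hP hQ⟩
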